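/- Let 0 < δ < 1 be a fixed constant, let X be large, let r be a positive integer with r ≍ (log X)^δ, and set z_0 = exp((log X)^{1/3}). Suppose g is a multiplicative function with |g(p)| ≪ 1 uniformly for all primes p. Then Σ_{b | P(z_0), ω(b) ≤ r, (b, ℓ) = 1} μ(b) g(b)/b = Π_{p ≤ z_0, p ∤ ℓ} (1 − g(p)/p) + O(exp(−r log log r)), uniformly for all positive integers ℓ. -/

import Mathlib

open Finset

/-- `P(y)`: the product of all primes `p ≤ y`. -/
noncomputable def Pprod (y : ℝ) : ℕ := ∏ p ∈ (Finset.Iic ⌊y⌋₊).filter Nat.Prime, p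

lemma g_prod_primes (g : ℕ → ℝ) (hg1 : g 1 = 1)
    (hgm : ∀ m n : ℕ, Nat.Coprime m n → g (m * n) = g m * g n) :
    ∀ (S : Finset ℕ), (∀ p ∈ S, p.Prime) → g (∏ p ∈ S, p) = ∏ p ∈ S, g p := by
  intro S
  induction S using Finset.cons_induction with
  | empty => simpa using hg1
  | cons a s ha ih =>
    intro hS
    have hap : a.Prime := hS a (mem_cons_self a s)
    have hsp : ∀ p ∈ s, p.Prime := fun p hp => hS p (mem_cons.mpr (Or.inr hp))
    have hcop : Nat.Coprime a (∏ p ∈ s, p) := by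
      rw [Nat.coprime_comm, Nat.coprime_prod_left_iff]
      intro p hp
      rw [Nat.coprime_primes (hsp p hp) hap]
      exact fun h => ha (h ▸ hp)
    rw [prod_cons, hgm a _ hcop, prod_cons, ih hsp]

lemma squarefree_prod_primes :
    ∀ (S : Finset ℕ), (∀ p ∈ S, p.Prime) → Squarefree (∏ p ∈ S, p) := by
  intro S
  induction S using Finset.cons_induction with
  | empty => simp
  | cons a s ha ih =>
    intro hS
    have hap : a.Prime := hS a (mem_cons_self a s)
    have hsp : ∀ p ∈ s, p.Prime := fun p hp => hS p (mem_cons.mpr (Or.inr hp))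
    have hcop : Nat.Coprime a (∏ p ∈ s, p) := by
      rw [Nat.coprime_comm, Nat.coprime_prod_left_iff]
      intro p hp
      rw [Nat.coprime_primes (hsp p hp) hap]
      exact fun h => ha (h ▸ hp)
    rw [prod_cons, Nat.squarefree_mul_iff]
    exact ⟨hcop, hap.squarefree, ih hsp⟩

private lemma key_binom (x y : ℝ) (hx : 0 ≤ x) (hy : 0 ≤ y) (k : ℕ) :
    x ^ (k+1) + (k+1 : ℝ) * y * x ^ k ≤ (x + y) ^ (k+1) := by
  rw [add_pow]
  have hsub : ({k, k+1} : Finset ℕ) ⊆ Finset.range (k+2) := by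
    intro i hi; simp only [mem_insert, mem_singleton] at hi
    rcases hi with h | h <;> simp [h, Nat.lt_succ_iff]
  calc x ^ (k+1) + (k+1 : ℝ) * y * x ^ k
      = ∑ i ∈ ({k, k+1} : Finset ℕ), x ^ i * y ^ (k+1-i) * (Nat.choose (k+1) i : ℝ) := by
        rw [Finset.sum_pair (by omega)]
        simp [Nat.choose_succ_self_right, Nat.succ_sub]
        ring
    _ ≤ ∑ i ∈ Finset.range (k+2), x ^ i * y ^ (k+1-i) * (Nat.choose (k+1) i : ℝ) := by
        apply Finset.sum_le_sum_of_subset_of_nonneg hsub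
        intro i _ _; positivity

lemma esymm_le (f : ℕ → ℝ) (hf : ∀ p, 0 ≤ f p) :
    ∀ (s : Finset ℕ) (k : ℕ),
      ∑ S ∈ s.powersetCard k, ∏ p ∈ S, f p ≤ (∑ p ∈ s, f p) ^ k / (k.factorial : ℝ) := by
  intro s
  induction s using Finset.cons_induction with
  | empty =>
    intro k
    cases k with
    | zero => simp
    | succ k =>
      rw [Finset.powersetCard_eq_filter, Finset.powerset_empty, Finset.filter_singleton]
      simp
  | cons a s ha ih =>
    intro k
    cases k with
    | zero => simp
    | succ k =>
      have hx : 0 ≤ ∑ p ∈ s, f p := Finset.sum_nonneg fun p _ => hf p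
      rw [Finset.cons_eq_insert, Finset.powersetCard_succ_insert ha]
      have hdis : Disjoint (Finset.powersetCard (k+1) s)
          ((Finset.powersetCard k s).image (insert a)) := by
        rw [Finset.disjoint_left]
        intro S hS hS'
        obtain ⟨t, ht, rfl⟩ := Finset.mem_image.mp hS'
        have : a ∉ t := fun h => ha ((Finset.mem_powersetCard.mp ht).1 h)
        have haS : a ∈ insert a t := Finset.mem_insert_self a t
        have := (Finset.mem_powersetCard.mp hS).1 haS
        exact ha this
      rw [Finset.sum_union hdis]
      have himg : ∑ S ∈ (Finset.powersetCard k s).image (insert a), ∏ p ∈ S, f p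
          = f a * ∑ S ∈ Finset.powersetCard k s, ∏ p ∈ S, f p := by
        rw [Finset.sum_image, Finset.mul_sum]
        · apply Finset.sum_congr rfl
          intro S hS
          have haS : a ∉ S := fun h => ha ((Finset.mem_powersetCard.mp hS).1 h)
          rw [Finset.prod_insert haS]
        · intro S hS t ht h
          have haS : a ∉ S := fun hm => ha ((Finset.mem_powersetCard.mp hS).1 hm)
          have hat : a ∉ t := fun hm => ha ((Finset.mem_powersetCard.mp ht).1 hm)
          have := congrArg (Finset.erase · a) h
          simpa [Finset.erase_insert, haS, hat] using this
      rw [himg, Finset.sum_insert ha]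
      have hfact : ((k+1).factorial : ℝ) = (k+1 : ℝ) * (k.factorial : ℝ) := by
        rw [Nat.factorial_succ]; push_cast; ring
      have hfk : (0:ℝ) < (k.factorial : ℝ) := by positivity
      calc ∑ S ∈ Finset.powersetCard (k+1) s, ∏ p ∈ S, f p
            + f a * ∑ S ∈ Finset.powersetCard k s, ∏ p ∈ S, f p
          ≤ (∑ p ∈ s, f p) ^ (k+1) / ((k+1).factorial : ℝ)
            + f a * ((∑ p ∈ s, f p) ^ k / (k.factorial : ℝ)) := by
            gcongr
            · exact ih (k+1)
            · exact hf a
            · exact ih k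
        _ = ((∑ p ∈ s, f p) ^ (k+1) + (k+1 : ℝ) * f a * (∑ p ∈ s, f p) ^ k)
              / ((k+1).factorial : ℝ) := by
            rw [hfact]; field_simp
        _ ≤ (f a + ∑ p ∈ s, f p) ^ (k+1) / ((k+1).factorial : ℝ) := by
            have hb := key_binom (∑ p ∈ s, f p) (f a) hx (hf a) k
            rw [add_comm (f a)]
            gcongr

lemma sum_filter_card_gt (f : ℕ → ℝ) (hf : ∀ p, 0 ≤ f p) (s : Finset ℕ) (r : ℕ) :
    ∑ S ∈ s.powerset.filter (fun S => ¬ S.card ≤ r), ∏ p ∈ S, f p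
      ≤ ∑ j ∈ Finset.Ico (r+1) (s.card+1), (∑ p ∈ s, f p) ^ j / (j.factorial : ℝ) := by
  have hset : s.powerset.filter (fun S => ¬ S.card ≤ r)
      = (Finset.Ico (r+1) (s.card+1)).biUnion (fun j => s.powersetCard j) := by
    ext S
    simp only [Finset.mem_filter, Finset.mem_powerset, Finset.mem_biUnion, Finset.mem_Ico,
      Finset.mem_powersetCard, not_le]
    constructor
    · rintro ⟨hSs, hcard⟩
      exact ⟨S.card, ⟨by omega, Nat.lt_succ_of_le (Finset.card_le_card hSs)⟩, hSs, rfl⟩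
    · rintro ⟨j, ⟨hj1, _⟩, hSs, rfl⟩
      exact ⟨hSs, by omega⟩
  have hd : Set.PairwiseDisjoint ↑(Finset.Ico (r+1) (s.card+1))
      (fun j => s.powersetCard j) := by
    intro i _ j _ hij
    apply Finset.disjoint_left.mpr
    intro S h1 h2
    exact hij ((Finset.mem_powersetCard.mp h1).2.symm.trans (Finset.mem_powersetCard.mp h2).2)
  rw [hset, Finset.sum_biUnion hd]
  exact Finset.sum_le_sum fun j _ => esymm_le f hf s j

lemma tail_geo (E : ℝ) (hE : 0 ≤ E) (r m : ℕ) (q : ℝ)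
    (hq : q = Real.exp 1 * E / (r+1)) (hq2 : q ≤ 1/2) :
    ∑ j ∈ Finset.Ico (r+1) m, E ^ j / (j.factorial : ℝ) ≤ 2 * q ^ (r+1) := by
  have hq0 : 0 ≤ q := by
    rw [hq]; positivity
  have hterm : ∀ j ∈ Finset.Ico (r+1) m, E ^ j / (j.factorial : ℝ) ≤ q ^ j := by
    intro j hj
    have hj1 : r + 1 ≤ j := (Finset.mem_Ico.mp hj).1
    have hjn : 0 < j := by omega
    have hjr : (0:ℝ) < j := by exact_mod_cast hjn
    have hfac : (0:ℝ) < (j.factorial : ℝ) := by positivity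
    have hpow : ((j:ℝ)) ^ j ≤ (j.factorial : ℝ) * Real.exp 1 ^ j := by
      have h := Real.pow_div_factorial_le_exp (j:ℝ) (le_of_lt hjr) j
      rw [div_le_iff₀ hfac] at h
      calc ((j:ℝ))^j ≤ Real.exp j * j.factorial := h
        _ = j.factorial * Real.exp 1 ^ j := by
            rw [← Real.exp_nat_mul, mul_one, mul_comm]
    have step1 : E ^ j / (j.factorial : ℝ) ≤ (Real.exp 1 * E / j) ^ j := by
      rw [div_pow, mul_pow, div_le_div_iff₀ hfac (by positivity)]
      calc E ^ j * (j:ℝ) ^ j ≤ E ^ j * ((j.factorial : ℝ) * Real.exp 1 ^ j) :=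
            mul_le_mul_of_nonneg_left hpow (pow_nonneg hE j)
        _ = Real.exp 1 ^ j * E ^ j * (j.factorial : ℝ) := by ring
    have step2 : (Real.exp 1 * E / j) ^ j ≤ q ^ j := by
      apply pow_le_pow_left₀ (by positivity)
      rw [hq]
      apply div_le_div_of_nonneg_left (by positivity) (by positivity)
      exact_mod_cast hj1
    exact step1.trans step2
  calc ∑ j ∈ Finset.Ico (r+1) m, E ^ j / (j.factorial : ℝ)
      ≤ ∑ j ∈ Finset.Ico (r+1) m, q ^ j := Finset.sum_le_sum hterm
    _ ≤ 2 * q ^ (r+1) := by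
      rw [Finset.sum_Ico_eq_sum_range]
      have : ∀ i, q ^ (r+1+i) = q ^ (r+1) * q ^ i := fun i => pow_add q (r+1) i
      calc ∑ i ∈ Finset.range (m - (r+1)), q ^ (r+1+i)
          = q ^ (r+1) * ∑ i ∈ Finset.range (m - (r+1)), q ^ i := by
            rw [Finset.mul_sum]; exact Finset.sum_congr rfl fun i _ => this i
        _ ≤ q ^ (r+1) * 2 := by
            apply mul_le_mul_of_nonneg_left ?_ (by positivity)
            calc ∑ i ∈ Finset.range (m - (r+1)), q ^ i
                ≤ ∑ i ∈ Finset.range (m - (r+1)), (1/2:ℝ) ^ i :=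
                  Finset.sum_le_sum fun i _ => pow_le_pow_left₀ hq0 hq2 i
              _ ≤ 2 := sum_geometric_two_le _
        _ = 2 * q ^ (r+1) := by ring

lemma theta_le (m : ℕ) :
    ∑ p ∈ (Finset.Iic m).filter Nat.Prime, Real.log p ≤ m * Real.log 4 := by
  have hIic : Finset.Iic m = Finset.range (m+1) := by
    ext x; simp [Nat.lt_succ_iff]
  have h4 : (primorial m : ℝ) ≤ (4:ℝ) ^ m := by
    have := primorial_le_4_pow m
    exact_mod_cast this
  have hpos : (0:ℝ) < (primorial m : ℝ) := by exact_mod_cast primorial_pos m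
  have hlog := Real.log_le_log hpos h4
  rw [Real.log_pow] at hlog
  have hprod : Real.log (primorial m : ℝ)
      = ∑ p ∈ (Finset.Iic m).filter Nat.Prime, Real.log p := by
    rw [primorial, hIic]
    push_cast
    rw [Real.log_prod]
    intro p hp
    have := (Finset.mem_filter.mp hp).2
    exact_mod_cast this.pos.ne'
  rw [hprod] at hlog
  exact hlog

lemma harmonic_le : ∀ L : ℕ, 1 ≤ L →
    ∑ j ∈ Finset.Icc 1 L, (1:ℝ)/j ≤ 1 + Real.log L := by
  intro L
  induction L with
  | zero => intro h; omega
  | succ n ih =>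
    intro _
    rcases Nat.eq_zero_or_pos n with rfl | hn
    · simp
    · rw [Finset.sum_Icc_succ_top (by omega : 1 ≤ n + 1)]
      have step : (1:ℝ)/(n+1) ≤ Real.log (n+1) - Real.log n := by
        have hlog : Real.log ((n:ℝ)/(n+1)) ≤ (n:ℝ)/(n+1) - 1 :=
          Real.log_le_sub_one_of_pos (by positivity)
        rw [Real.log_div (by positivity) (by positivity)] at hlog
        have h1 : (n:ℝ)/(n+1) - 1 = -(1/(n+1)) := by field_simp; ring
        rw [h1] at hlog
        linarith
      have := ih hn
      push_cast
      push_cast at this step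
      linarith

lemma mertens_aux (n : ℕ) (hn : 16 ≤ n) :
    ∑ p ∈ (Finset.Iic n).filter Nat.Prime, (1:ℝ)/p ≤ 12 * Real.log (Real.log n) := by
  classical
  set T := (Finset.Iic n).filter Nat.Prime with hT
  set L := Nat.log 2 n with hLdef
  have hmaps : ∀ p ∈ T, Nat.log 2 p ∈ Finset.Iic L := by
    intro p hp
    exact Finset.mem_Iic.mpr (Nat.log_mono_right (Finset.mem_Iic.mp (Finset.mem_filter.mp hp).1))
  rw [← Finset.sum_fiberwise_of_maps_to hmaps (fun p => (1:ℝ)/p)]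
  -- bound each fiber
  have hfiber : ∀ j ∈ Finset.Iic L,
      ∑ p ∈ T.filter (fun p => Nat.log 2 p = j), (1:ℝ)/p
        ≤ (if j = 0 then (0:ℝ) else 4/(j:ℝ)) := by
    intro j _
    rcases Nat.eq_zero_or_pos j with rfl | hj
    · have : T.filter (fun p => Nat.log 2 p = 0) = ∅ := by
        apply Finset.filter_false_of_mem
        intro p hp
        have hprime : p.Prime := (Finset.mem_filter.mp hp).2
        have : 0 < Nat.log 2 p := Nat.log_pos one_lt_two hprime.two_le
        omega
      rw [this, if_pos rfl, Finset.sum_empty]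
    · simp only [if_neg hj.ne']
      set F := T.filter (fun p => Nat.log 2 p = j) with hF
      have hmem : ∀ p ∈ F, 2^j ≤ p ∧ p < 2^(j+1) ∧ p.Prime := by
        intro p hp
        obtain ⟨hpT, hlog⟩ := Finset.mem_filter.mp hp
        have hprime : p.Prime := (Finset.mem_filter.mp hpT).2
        constructor
        · calc 2^j = 2^(Nat.log 2 p) := by rw [hlog]
            _ ≤ p := Nat.pow_log_le_self 2 hprime.pos.ne'
        · exact ⟨by rw [← hlog]; exact Nat.lt_pow_succ_log_self one_lt_two p, hprime⟩
      -- card bound : F.card * (j * log 2) ≤ 2^(j+1) * log 4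
      have hcard : (F.card : ℝ) * ((j:ℝ) * Real.log 2) ≤ (2:ℝ)^(j+1) * Real.log 4 := by
        have h1 : (F.card : ℝ) * ((j:ℝ) * Real.log 2) ≤ ∑ p ∈ F, Real.log p := by
          rw [Finset.card_eq_sum_ones F]
          push_cast
          rw [Finset.sum_mul]
          apply Finset.sum_le_sum
          intro p hp
          have h2j : (2:ℝ)^j ≤ (p:ℝ) := by exact_mod_cast (hmem p hp).1
          calc 1 * ((j:ℝ) * Real.log 2) = Real.log ((2:ℝ)^j) := by
                rw [Real.log_pow]; ring
            _ ≤ Real.log p := Real.log_le_log (by positivity) h2j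
        have h2 : ∑ p ∈ F, Real.log p
            ≤ ∑ p ∈ (Finset.Iic (2^(j+1))).filter Nat.Prime, Real.log p := by
          apply Finset.sum_le_sum_of_subset_of_nonneg
          · intro p hp
            rw [Finset.mem_filter, Finset.mem_Iic]
            exact ⟨le_of_lt (hmem p hp).2.1, (hmem p hp).2.2⟩
          · intro p hp _
            have hprime : p.Prime := (Finset.mem_filter.mp hp).2
            exact Real.log_nonneg (by exact_mod_cast hprime.one_lt.le)
        have h3 := theta_le (2^(j+1))
        have : ((2^(j+1) : ℕ) : ℝ) = (2:ℝ)^(j+1) := by push_cast; ring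
        rw [this] at h3
        linarith
      -- so F.card ≤ 2^(j+2)/j, and each 1/p ≤ 1/2^j
      have hlog2pos : (0:ℝ) < Real.log 2 := Real.log_pos one_lt_two
      have hjr : (0:ℝ) < (j:ℝ) := by exact_mod_cast hj
      have hcard2 : (F.card : ℝ) ≤ (2:ℝ)^(j+2) / j := by
        rw [le_div_iff₀ hjr]
        have h4 : Real.log 4 = 2 * Real.log 2 := by
          rw [show (4:ℝ) = 2^2 by norm_num, Real.log_pow]; push_cast; ring
        have := hcard
        rw [h4] at this
        have h5 : (2:ℝ)^(j+1) * (2 * Real.log 2) = (2:ℝ)^(j+2) * Real.log 2 := by ring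
        rw [h5] at this
        have h6 : (F.card : ℝ) * (j:ℝ) * Real.log 2 ≤ (2:ℝ)^(j+2) * Real.log 2 := by
          nlinarith
        exact le_of_mul_le_mul_right (by linarith) hlog2pos
      calc ∑ p ∈ F, (1:ℝ)/p ≤ (F.card : ℝ) * (1/(2:ℝ)^j) := by
            rw [Finset.card_eq_sum_ones F]
            push_cast
            rw [Finset.sum_mul]
            apply Finset.sum_le_sum
            intro p hp
            have h2j : (2:ℝ)^j ≤ (p:ℝ) := by exact_mod_cast (hmem p hp).1
            have hppos : (0:ℝ) < p := by
              have := (hmem p hp).2.2.pos; exact_mod_cast this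
            rw [one_mul]
            exact div_le_div_of_nonneg_left one_pos.le (by positivity) h2j |>.trans_eq rfl
        _ ≤ ((2:ℝ)^(j+2)/j) * (1/(2:ℝ)^j) := by
            apply mul_le_mul_of_nonneg_right hcard2 (by positivity)
        _ = 4/j := by
            rw [pow_add]
            field_simp
            ring
  -- sum the fiber bounds
  have hL4 : 4 ≤ L := by
    rw [hLdef]
    calc 4 = Nat.log 2 16 :=
          (Nat.log_eq_of_pow_le_of_lt_pow (by norm_num) (by norm_num)).symm
      _ ≤ Nat.log 2 n := Nat.log_mono_right hn
  have hsum : ∑ j ∈ Finset.Iic L, (if j = 0 then (0:ℝ) else 4/(j:ℝ))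
      ≤ 4 * (1 + Real.log L) := by
    have hIic : Finset.Iic L = insert 0 (Finset.Icc 1 L) := by
      ext x; simp [Nat.lt_succ_iff]; omega
    rw [hIic, Finset.sum_insert (by simp)]
    rw [if_pos rfl, zero_add]
    have : ∑ j ∈ Finset.Icc 1 L, (if j = 0 then (0:ℝ) else 4/(j:ℝ))
        = 4 * ∑ j ∈ Finset.Icc 1 L, (1:ℝ)/j := by
      rw [Finset.mul_sum]
      apply Finset.sum_congr rfl
      intro j hj
      have : j ≠ 0 := by
        have := (Finset.mem_Icc.mp hj).1; omega
      rw [if_neg this]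
      field_simp
    rw [this]
    have := harmonic_le L (by omega)
    nlinarith
  have htotal := Finset.sum_le_sum hfiber
  have hfinal : 4 * (1 + Real.log L) ≤ 12 * Real.log (Real.log n) := by
    have hlog2lt : Real.log 2 < 0.6931471808 := Real.log_two_lt_d9
    have hlog2gt : (0.6931471803:ℝ) < Real.log 2 := Real.log_two_gt_d9
    have hn0 : (0:ℝ) < (n:ℝ) := by
      have : 0 < n := by omega
      exact_mod_cast this
    have hL0 : (0:ℝ) < (L:ℝ) := by
      have : 0 < L := by omega
      exact_mod_cast this
    -- 2^L ≤ n, so L * log 2 ≤ log n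
    have h2L : (2:ℝ)^L ≤ (n:ℝ) := by
      have := Nat.pow_log_le_self 2 (show n ≠ 0 by omega)
      rw [hLdef]; exact_mod_cast this
    have hLlog : (L:ℝ) * Real.log 2 ≤ Real.log n := by
      have := Real.log_le_log (by positivity) h2L
      rwa [Real.log_pow] at this
    have hlogn_lb : (2.7725887212:ℝ) ≤ Real.log n := by
      have h16 : (16:ℝ) ≤ (n:ℝ) := by exact_mod_cast hn
      have := Real.log_le_log (by norm_num) h16
      have h16log : Real.log 16 = 4 * Real.log 2 := by
        rw [show (16:ℝ) = 2^4 by norm_num, Real.log_pow]; push_cast; ring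
      rw [h16log] at this
      nlinarith
    have hlogn_pos : (0:ℝ) < Real.log n := by linarith
    have hlln : (1:ℝ) ≤ Real.log (Real.log n) := by
      rw [Real.le_log_iff_exp_le hlogn_pos]
      have := Real.exp_one_lt_d9
      linarith
    have hL2logn : (L:ℝ) ≤ 2 * Real.log n := by
      nlinarith
    have hlogL : Real.log L ≤ Real.log 2 + Real.log (Real.log n) := by
      have h1 : Real.log L ≤ Real.log (2 * Real.log n) :=
        Real.log_le_log hL0 hL2logn
      rwa [Real.log_mul (by norm_num) (by linarith)] at h1
    nlinarith
  calc _ ≤ _ := htotal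
    _ ≤ _ := hsum
    _ ≤ _ := hfinal

lemma sum_over_divisors (g : ℕ → ℝ) (hg1 : g 1 = 1)
    (hgm : ∀ m n : ℕ, Nat.Coprime m n → g (m * n) = g m * g n)
    (T : Finset ℕ) (hT : ∀ p ∈ T, p.Prime) (r ℓ : ℕ) :
    ∑ b ∈ (∏ p ∈ T, p).divisors.filter
        (fun b => b.primeFactors.card ≤ r ∧ Nat.gcd b ℓ = 1),
      (ArithmeticFunction.moebius b : ℝ) * g b / b
    = ∑ S ∈ ((T.filter (fun p => ¬ p ∣ ℓ)).powerset.filter (fun S => S.card ≤ r)),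
        ∏ p ∈ S, (-(g p / p)) := by
  classical
  have hPsq : Squarefree (∏ p ∈ T, p) := squarefree_prod_primes T hT
  have hP0 : (∏ p ∈ T, p) ≠ 0 := hPsq.ne_zero
  have hPf : (∏ p ∈ T, p).primeFactors = T := Nat.primeFactors_prod hT
  apply Finset.sum_nbij' (i := fun b => b.primeFactors) (j := fun S => ∏ p ∈ S, p)
  · -- forward membership
    intro b hb
    obtain ⟨hbdvd, hcard, hgcd⟩ : b ∣ (∏ p ∈ T, p) ∧ b.primeFactors.card ≤ r ∧ Nat.gcd b ℓ = 1 := by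
      have := Finset.mem_filter.mp hb
      exact ⟨(Nat.mem_divisors.mp this.1).1, this.2.1, this.2.2⟩
    rw [Finset.mem_filter, Finset.mem_powerset]
    refine ⟨?_, hcard⟩
    intro p hp
    rw [Finset.mem_filter]
    constructor
    · exact hPf ▸ Nat.primeFactors_mono hbdvd hP0 hp
    · intro hpl
      have hpb : p ∣ b := Nat.dvd_of_mem_primeFactors hp
      have hpp : p.Prime := Nat.prime_of_mem_primeFactors hp
      have : p ∣ Nat.gcd b ℓ := Nat.dvd_gcd hpb hpl
      rw [hgcd] at this
      exact hpp.ne_one (Nat.dvd_one.mp this)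
  · -- backward membership
    intro S hS
    obtain ⟨hSsub, hScard⟩ := Finset.mem_filter.mp hS
    rw [Finset.mem_powerset] at hSsub
    have hST : S ⊆ T := hSsub.trans (Finset.filter_subset _ _)
    have hSp : ∀ p ∈ S, p.Prime := fun p hp => hT p (hST hp)
    rw [Finset.mem_filter, Nat.mem_divisors]
    refine ⟨⟨Finset.prod_dvd_prod_of_subset S T _ hST, hP0⟩, ?_, ?_⟩
    · rw [Nat.primeFactors_prod hSp]
      exact hScard
    · rw [← Nat.coprime_iff_gcd_eq_one, Nat.coprime_prod_left_iff]
      intro p hp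
      rw [(hSp p hp).coprime_iff_not_dvd]
      exact (Finset.mem_filter.mp (hSsub hp)).2
  · -- left inverse
    intro b hb
    have hbdvd : b ∣ (∏ p ∈ T, p) := (Nat.mem_divisors.mp (Finset.mem_filter.mp hb).1).1
    exact Nat.prod_primeFactors_of_squarefree (hPsq.squarefree_of_dvd hbdvd)
  · -- right inverse
    intro S hS
    have hSsub := Finset.mem_powerset.mp (Finset.mem_filter.mp hS).1
    have hST : S ⊆ T := hSsub.trans (Finset.filter_subset _ _)
    exact Nat.primeFactors_prod (fun p hp => hT p (hST hp))
  · -- values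
    intro b hb
    have hbdvd : b ∣ (∏ p ∈ T, p) := (Nat.mem_divisors.mp (Finset.mem_filter.mp hb).1).1
    have hbsq : Squarefree b := hPsq.squarefree_of_dvd hbdvd
    have hb0 : b ≠ 0 := hbsq.ne_zero
    have hbp : ∀ p ∈ b.primeFactors, p.Prime := fun p hp => Nat.prime_of_mem_primeFactors hp
    have hbprod : ∏ p ∈ b.primeFactors, p = b := Nat.prod_primeFactors_of_squarefree hbsq
    have hmu : (ArithmeticFunction.moebius b : ℤ) = (-1) ^ b.primeFactors.card := by
      rw [ArithmeticFunction.moebius_apply_of_squarefree hbsq]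
      congr 1
      rw [← (ArithmeticFunction.cardDistinctFactors_eq_cardFactors_iff_squarefree hb0).mpr hbsq]
      rw [ArithmeticFunction.cardDistinctFactors_apply]
      rw [Nat.primeFactors, List.card_toFinset]
    have hgb : g b = ∏ p ∈ b.primeFactors, g p := by
      conv_lhs => rw [← hbprod]
      exact g_prod_primes g hg1 hgm b.primeFactors hbp
    have hbcast : (b:ℝ) = ∏ p ∈ b.primeFactors, (p:ℝ) := by
      conv_lhs => rw [← hbprod]
      push_cast
      ring
    rw [hgb, hbcast]
    have : ((ArithmeticFunction.moebius b : ℤ) : ℝ) = (-1:ℝ) ^ b.primeFactors.card := by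
      rw [hmu]; push_cast; ring
    rw [this, ← Finset.prod_const (-1:ℝ), ← Finset.prod_mul_distrib,
      ← Finset.prod_div_distrib]
    apply Finset.prod_congr rfl
    intro p _
    ring






set_option maxHeartbeats 1000000 in
/-- The fundamental lemma of sieve theory used in the paper: for fixed `0 < δ < 1`,
`r ≍ (log X)^δ`, `z₀ = exp((log X)^{1/3})`, and a multiplicative `g` with `|g(p)| ≪ 1`,
`∑_{b | P(z₀), ω(b) ≤ r, (b,ℓ)=1} μ(b) g(b)/b
  = ∏_{p ≤ z₀, p ∤ ℓ} (1 - g(p)/p) + O(exp(-r log log r))`,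
uniformly in the positive integer `ℓ`. -/
theorem statement6 (δ : ℝ) (hδ0 : 0 < δ) (hδ1 : δ < 1)
    (Cg c₁ c₂ : ℝ) (hCg : 0 < Cg) (hc₁ : 0 < c₁) (hc₂ : 0 < c₂) :
    ∃ C : ℝ, 0 < C ∧ ∃ X₀ : ℝ, ∀ X : ℝ, X₀ ≤ X → ∀ r : ℕ,
      c₁ * Real.log X ^ δ ≤ (r : ℝ) → (r : ℝ) ≤ c₂ * Real.log X ^ δ →
      ∀ g : ℕ → ℝ, g 1 = 1 → (∀ m n : ℕ, Nat.Coprime m n → g (m * n) = g m * g n) →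
      (∀ p : ℕ, p.Prime → |g p| ≤ Cg) →
      ∀ ℓ : ℕ, 0 < ℓ →
      |(∑ b ∈ (Pprod (Real.exp (Real.log X ^ ((1 : ℝ) / 3)))).divisors.filter
            (fun b => b.primeFactors.card ≤ r ∧ Nat.gcd b ℓ = 1),
          (ArithmeticFunction.moebius b : ℝ) * g b / b) -
        ∏ p ∈ (Finset.Iic ⌊Real.exp (Real.log X ^ ((1 : ℝ) / 3))⌋₊).filter
            (fun p => p.Prime ∧ ¬p ∣ ℓ), (1 - g p / p)| ≤
        C * Real.exp (-(r : ℝ) * Real.log (Real.log r)) := by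
  classical
  refine ⟨2, by norm_num, ?_⟩
  -- the eventually-true conditions
  have ev1 : ∀ᶠ X : ℝ in Filter.atTop,
      (16:ℝ) ≤ Real.exp (Real.log X ^ ((1:ℝ)/3)) :=
    (Real.tendsto_exp_atTop.comp ((tendsto_rpow_atTop (by norm_num : (0:ℝ) < 1/3)).comp
      Real.tendsto_log_atTop)).eventually_ge_atTop 16
  have ev2 : ∀ᶠ X : ℝ in Filter.atTop,
      max 1 (Real.log c₂) ≤ Real.log (Real.log X) :=
    (Real.tendsto_log_atTop.comp Real.tendsto_log_atTop).eventually_ge_atTop _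
  have ev3 : ∀ᶠ X : ℝ in Filter.atTop, (8:ℝ) ≤ c₁ * Real.log X ^ δ :=
    (((tendsto_rpow_atTop hδ0).comp Real.tendsto_log_atTop).const_mul_atTop
      hc₁).eventually_ge_atTop 8
  have ev5 : ∀ᶠ X : ℝ in Filter.atTop, (1:ℝ) ≤ Real.log X :=
    Real.tendsto_log_atTop.eventually_ge_atTop 1
  have ev4 : ∀ᶠ X : ℝ in Filter.atTop,
      8 * Real.exp 1 * Cg * (Real.log (Real.log X) * Real.log (Real.log X))
        ≤ c₁ * Real.log X ^ δ := by
    have hlo : (fun y : ℝ => Real.log y ^ (2:ℝ)) =o[Filter.atTop] (fun y => y ^ δ) :=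
      isLittleO_log_rpow_rpow_atTop 2 hδ0
    have hlo2 := hlo.comp_tendsto Real.tendsto_log_atTop
    have hc : (0:ℝ) < c₁ / (8 * Real.exp 1 * Cg) := by positivity
    have hev := hlo2.def hc
    filter_upwards [hev, ev2, ev5] with X h1 h2 h5
    have hLL0 : (0:ℝ) ≤ Real.log (Real.log X) :=
      le_trans zero_le_one (le_trans (le_max_left _ _) h2)
    have hLpos : (0:ℝ) < Real.log X := lt_of_lt_of_le zero_lt_one h5
    have hLd0 : (0:ℝ) ≤ Real.log X ^ δ := Real.rpow_nonneg hLpos.le δ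
    simp only [Function.comp_apply, Real.norm_eq_abs] at h1
    rw [abs_of_nonneg (Real.rpow_nonneg hLL0 2), abs_of_nonneg hLd0] at h1
    rw [show (2:ℝ) = ((2:ℕ):ℝ) by norm_num, Real.rpow_natCast] at h1
    have h1' : Real.log (Real.log X) * Real.log (Real.log X)
        ≤ c₁ / (8 * Real.exp 1 * Cg) * Real.log X ^ δ := by
      have : Real.log (Real.log X) ^ (2:ℕ)
          = Real.log (Real.log X) * Real.log (Real.log X) := sq (Real.log (Real.log X)) ▸ by ring
      linarith [h1, this.symm.le]
    have hepos : (0:ℝ) < Real.exp 1 := Real.exp_pos 1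
    calc 8 * Real.exp 1 * Cg * (Real.log (Real.log X) * Real.log (Real.log X))
        ≤ 8 * Real.exp 1 * Cg * (c₁ / (8 * Real.exp 1 * Cg) * Real.log X ^ δ) := by
          apply mul_le_mul_of_nonneg_left h1' (by positivity)
      _ = c₁ * Real.log X ^ δ := by field_simp
  obtain ⟨X₀, hX₀⟩ := Filter.eventually_atTop.mp (((ev1.and ev2).and (ev3.and ev4)).and ev5)
  refine ⟨X₀, ?_⟩
  intro X hX r hr1 hr2 g hg1 hgm hgC ℓ hℓ
  obtain ⟨⟨⟨h16, hmaxLL⟩, ⟨h8, hLL2⟩⟩, hL1⟩ := hX₀ X hX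
  set z := Real.exp (Real.log X ^ ((1:ℝ)/3)) with hzdef
  set N := ⌊z⌋₊ with hNdef
  set T := (Finset.Iic N).filter Nat.Prime with hTdef
  set T' := T.filter (fun p => ¬ p ∣ ℓ) with hT'def
  have hT : ∀ p ∈ T, p.Prime := fun p hp => (Finset.mem_filter.mp hp).2
  have hN16 : 16 ≤ N := Nat.le_floor (by exact_mod_cast h16)
  have hLpos : (0:ℝ) < Real.log X := lt_of_lt_of_le zero_lt_one hL1
  have hLL1 : (1:ℝ) ≤ Real.log (Real.log X) := le_trans (le_max_left _ _) hmaxLL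
  have hlogc2 : Real.log c₂ ≤ Real.log (Real.log X) := le_trans (le_max_right _ _) hmaxLL
  -- r facts
  have hr8' : (8:ℝ) ≤ (r:ℝ) := le_trans h8 hr1
  have hrn8 : 8 ≤ r := by exact_mod_cast hr8'
  -- rewrite the sum
  have hPeq : Pprod z = ∏ p ∈ T, p := rfl
  rw [hPeq, sum_over_divisors g hg1 hgm T hT r ℓ]
  -- rewrite the product set
  have hset : (Finset.Iic N).filter (fun p => p.Prime ∧ ¬ p ∣ ℓ) = T' := by
    rw [hT'def, hTdef, Finset.filter_filter]
  rw [hset]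
  -- expand the product
  have hprodexp : ∏ p ∈ T', (1 - g p / p) = ∑ S ∈ T'.powerset, ∏ p ∈ S, (-(g p / p)) := by
    have h1 : ∀ p ∈ T', (1 - g p / p) = (-(g p / p)) + 1 := by intro p _; ring
    rw [Finset.prod_congr rfl h1, Finset.prod_add]
    simp
  rw [hprodexp]
  rw [← Finset.sum_filter_add_sum_filter_not T'.powerset (fun S => S.card ≤ r)
    (fun S => ∏ p ∈ S, (-(g p / p)))]
  rw [show ∀ a b : ℝ, a - (a + b) = -b from fun a b => by ring]
  rw [abs_neg]
  -- bound by sum of absolute values over the bigger family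
  set E : ℝ := ∑ p ∈ T, Cg / p with hEdef
  have hE0 : 0 ≤ E := Finset.sum_nonneg fun p _ => by positivity
  have habs : |∑ S ∈ T'.powerset.filter (fun S => ¬ S.card ≤ r), ∏ p ∈ S, (-(g p / p))|
      ≤ ∑ S ∈ T.powerset.filter (fun S => ¬ S.card ≤ r), ∏ p ∈ S, (Cg / p) := by
    calc |∑ S ∈ T'.powerset.filter (fun S => ¬ S.card ≤ r), ∏ p ∈ S, (-(g p / p))|
        ≤ ∑ S ∈ T'.powerset.filter (fun S => ¬ S.card ≤ r), |∏ p ∈ S, (-(g p / p))| :=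
          Finset.abs_sum_le_sum_abs _ _
      _ ≤ ∑ S ∈ T'.powerset.filter (fun S => ¬ S.card ≤ r), ∏ p ∈ S, (Cg / p) := by
          apply Finset.sum_le_sum
          intro S hS
          have hST' : S ⊆ T' := Finset.mem_powerset.mp (Finset.mem_filter.mp hS).1
          rw [Finset.abs_prod]
          apply Finset.prod_le_prod (fun p _ => abs_nonneg _)
          intro p hp
          have hpp : p.Prime := hT p (Finset.filter_subset _ _ (hST' hp))
          have hppos : (0:ℝ) < p := by exact_mod_cast hpp.pos
          rw [abs_neg, abs_div, Nat.abs_cast]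
          gcongr
          exact hgC p hpp
      _ ≤ ∑ S ∈ T.powerset.filter (fun S => ¬ S.card ≤ r), ∏ p ∈ S, (Cg / p) := by
          apply Finset.sum_le_sum_of_subset_of_nonneg
          · apply Finset.filter_subset_filter
            exact Finset.powerset_mono.mpr (Finset.filter_subset _ _)
          · intro S hS _
            apply Finset.prod_nonneg
            intro p _
            positivity
  have htail := sum_filter_card_gt (fun p => Cg / p) (fun p => by positivity) T r
  -- Mertens bound on E
  have hE4 : E ≤ 4 * Cg * Real.log (Real.log X) := by
    have hmert := mertens_aux N hN16
    have hzpos : (0:ℝ) ≤ z := le_of_lt (Real.exp_pos _)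
    have hNz : (N:ℝ) ≤ z := Nat.floor_le hzpos
    have hN1 : (1:ℝ) < (N:ℝ) := by
      have : (16:ℝ) ≤ (N:ℝ) := by exact_mod_cast hN16
      linarith
    have hlogN : Real.log N ≤ Real.log X ^ ((1:ℝ)/3) := by
      have := Real.log_le_log (by linarith) hNz
      rwa [hzdef, Real.log_exp] at this
    have hlogNpos : (0:ℝ) < Real.log N := Real.log_pos hN1
    have hloglogN : Real.log (Real.log N) ≤ Real.log (Real.log X ^ ((1:ℝ)/3)) :=
      Real.log_le_log hlogNpos hlogN
    rw [Real.log_rpow hLpos] at hloglogN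
    have hsum1p : ∑ p ∈ T, (1:ℝ)/p ≤ 12 * Real.log (Real.log N) := hmert
    have hEeq : E = Cg * ∑ p ∈ T, (1:ℝ)/p := by
      rw [hEdef, Finset.mul_sum]
      apply Finset.sum_congr rfl
      intro p _
      rw [mul_one_div]
    rw [hEeq]
    calc Cg * ∑ p ∈ T, (1:ℝ)/p ≤ Cg * (12 * Real.log (Real.log N)) :=
          mul_le_mul_of_nonneg_left hsum1p hCg.le
      _ ≤ Cg * (12 * (1/3 * Real.log (Real.log X))) := by
          apply mul_le_mul_of_nonneg_left ?_ hCg.le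
          linarith
      _ = 4 * Cg * Real.log (Real.log X) := by ring
  -- log r bounds
  have hrpos : (0:ℝ) < (r:ℝ) := by linarith
  have hlogr_le : Real.log r ≤ 2 * Real.log (Real.log X) := by
    have hc2pow : (0:ℝ) < c₂ * Real.log X ^ δ :=
      mul_pos hc₂ (Real.rpow_pos_of_pos hLpos δ)
    have h1 : Real.log r ≤ Real.log (c₂ * Real.log X ^ δ) :=
      Real.log_le_log hrpos hr2
    rw [Real.log_mul hc₂.ne' (Real.rpow_pos_of_pos hLpos δ).ne',
      Real.log_rpow hLpos] at h1
    have hLL0' : (0:ℝ) ≤ Real.log (Real.log X) := by linarith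
    have h2 : δ * Real.log (Real.log X) ≤ Real.log (Real.log X) := by
      calc δ * Real.log (Real.log X) ≤ 1 * Real.log (Real.log X) :=
            mul_le_mul_of_nonneg_right hδ1.le hLL0'
        _ = Real.log (Real.log X) := one_mul _
    linarith
  have hlogr_ge2 : (2:ℝ) ≤ Real.log r := by
    have h1 : Real.log 8 ≤ Real.log r := Real.log_le_log (by norm_num) hr8'
    have h8log : Real.log 8 = 3 * Real.log 2 := by
      rw [show (8:ℝ) = 2^3 by norm_num, Real.log_pow]; push_cast; ring
    nlinarith [Real.log_two_gt_d9]
  -- the key inequality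
  have hkey : Real.exp 1 * E * Real.log r ≤ (r:ℝ) + 1 := by
    have hepos : (0:ℝ) < Real.exp 1 := Real.exp_pos 1
    have hLL0 : (0:ℝ) ≤ Real.log (Real.log X) := by linarith
    have hstep : Real.exp 1 * E * Real.log r
        ≤ Real.exp 1 * (4 * Cg * Real.log (Real.log X)) * (2 * Real.log (Real.log X)) := by
      apply mul_le_mul
      · exact mul_le_mul_of_nonneg_left hE4 hepos.le
      · exact hlogr_le
      · linarith
      · positivity
    have : Real.exp 1 * (4 * Cg * Real.log (Real.log X)) * (2 * Real.log (Real.log X))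
        = 8 * Real.exp 1 * Cg * (Real.log (Real.log X) * Real.log (Real.log X)) := by ring
    rw [this] at hstep
    linarith
  -- q bounds
  set q : ℝ := Real.exp 1 * E / (r+1) with hqdef
  have hq0 : 0 ≤ q := by positivity
  have hlrpos : (0:ℝ) < Real.log r := by linarith
  have hqle : q ≤ 1 / Real.log r := by
    rw [hqdef, div_le_div_iff₀ (by positivity) hlrpos]
    linarith [hkey]
  have hq2 : q ≤ 1/2 := by
    apply le_trans hqle
    rw [div_le_div_iff₀ hlrpos (by norm_num)]
    linarith
  have hgeo := tail_geo E hE0 r (T.card + 1) q hqdef hq2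
  -- final chain
  have hfin : 2 * q ^ (r+1) ≤ 2 * Real.exp (-(r:ℝ) * Real.log (Real.log r)) := by
    have hq1 : q ≤ 1 := by linarith
    have h1 : q ^ (r+1) ≤ q ^ r := pow_le_pow_of_le_one hq0 hq1 (Nat.le_succ r)
    have h2 : q ^ r ≤ (1 / Real.log r) ^ r := pow_le_pow_left₀ hq0 hqle r
    have h3 : (1 / Real.log r) ^ r = Real.exp (-(r:ℝ) * Real.log (Real.log r)) := by
      rw [one_div, ← Real.exp_log (inv_pos.mpr hlrpos), ← Real.exp_nat_mul,
        Real.log_inv]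
      ring_nf
    linarith
  calc |∑ S ∈ T'.powerset.filter (fun S => ¬ S.card ≤ r), ∏ p ∈ S, (-(g p / p))|
      ≤ ∑ S ∈ T.powerset.filter (fun S => ¬ S.card ≤ r), ∏ p ∈ S, (Cg / p) := habs
    _ ≤ ∑ j ∈ Finset.Ico (r+1) (T.card+1), E ^ j / (j.factorial : ℝ) := htail
    _ ≤ 2 * q ^ (r+1) := hgeo
    _ ≤ 2 * Real.exp (-(r:ℝ) * Real.log (Real.log r)) := hfin
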